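/- Reduction via the trigonometric ansatz: let d1, d2, d3 be positive real constants with d1 > d3, set κ = 1/√(d1 − d3), and let α0, α1, α2 be real constants. Suppose φ1, φ2, φ3 : ℝ → ℝ are differentiable and solve the ODE system φ1' + φ1(φ2 − 1) = 0, φ2' − φ2φ3 + ((d2 − d3)/(d1 − d3))·φ2(φ2 − 1) − (α0(d1 − d2)/(d1 − d3))·φ1 = 0, φ3' + φ2φ3 + (α0(d1 − d2)/(d1 − d3))·φ1 = 0. Then the functions u(t,x) = φ1(t)·(α0 + α1·sin(κx)·exp(−d1κ²t) + α2·cos(κx)·exp(−d1κ²t)), v(t,x) = φ2(t) − u(t,x), w(t,x) = φ3(t) + ((d1 − d2)/(d1 − d3))·u(t,x) satisfy the HGF system (2-3*) at every point (t,x) ∈ ℝ × ℝ. -/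

import Mathlib

/-- Reduction via the trigonometric ansatz (d1 > d3) to the HGF system (2-3*). -/
theorem hgf_reduction_trig_ansatz
    (d1 d2 d3 : ℝ) (hd1 : 0 < d1) (hd2 : 0 < d2) (hd3 : 0 < d3) (hd13 : d3 < d1)
    (κ : ℝ) (hκ : κ = 1 / Real.sqrt (d1 - d3))
    (α0 α1 α2 : ℝ)
    (φ1 φ2 φ3 : ℝ → ℝ)
    (hφ1 : Differentiable ℝ φ1) (hφ2 : Differentiable ℝ φ2) (hφ3 : Differentiable ℝ φ3)
    (hode1 : ∀ t : ℝ, deriv φ1 t + φ1 t * (φ2 t - 1) = 0)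
    (hode2 : ∀ t : ℝ, deriv φ2 t - φ2 t * φ3 t
        + ((d2 - d3) / (d1 - d3)) * (φ2 t * (φ2 t - 1))
        - (α0 * (d1 - d2) / (d1 - d3)) * φ1 t = 0)
    (hode3 : ∀ t : ℝ, deriv φ3 t + φ2 t * φ3 t
        + (α0 * (d1 - d2) / (d1 - d3)) * φ1 t = 0)
    (u v w : ℝ → ℝ → ℝ)
    (hu : ∀ t x : ℝ, u t x = φ1 t * (α0 + α1 * Real.sin (κ * x) * Real.exp (-d1 * κ ^ 2 * t)
        + α2 * Real.cos (κ * x) * Real.exp (-d1 * κ ^ 2 * t)))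
    (hv : ∀ t x : ℝ, v t x = φ2 t - u t x)
    (hw : ∀ t x : ℝ, w t x = φ3 t + ((d1 - d2) / (d1 - d3)) * u t x) :
    ∀ t x : ℝ,
      deriv (fun s => u s x) t
        = d1 * deriv (fun y => deriv (fun z => u t z) y) x
          + u t x * (1 - u t x - v t x) ∧
      deriv (fun s => v s x) t
        = d2 * deriv (fun y => deriv (fun z => v t z) y) x
          + ((d2 - d3) / (d1 - d3)) * (v t x * (1 - u t x - v t x))
          + u t x * w t x + v t x * w t x ∧
      deriv (fun s => w s x) t
        = d3 * deriv (fun y => deriv (fun z => w t z) y) x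
          - u t x * w t x - v t x * w t x := by
  intro t x
  have hd13' : (0:ℝ) < d1 - d3 := sub_pos.mpr hd13
  have hne : d1 - d3 ≠ 0 := ne_of_gt hd13'
  have hκ2 : κ ^ 2 = 1 / (d1 - d3) := by
    rw [hκ, div_pow, one_pow, Real.sq_sqrt hd13'.le]
  -- abbreviations
  set e : ℝ := (d1 - d2) / (d1 - d3) with he
  -- exponential derivative
  have hE : ∀ s : ℝ, HasDerivAt (fun r => Real.exp (-d1 * κ ^ 2 * r))
      (-d1 * κ ^ 2 * Real.exp (-d1 * κ ^ 2 * s)) s := by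
    intro s
    have h := ((hasDerivAt_id s).const_mul (-d1 * κ ^ 2)).exp
    simpa [mul_comm] using h
  -- trig derivative pieces
  have hG : ∀ y : ℝ, HasDerivAt (fun z => α1 * Real.sin (κ * z) + α2 * Real.cos (κ * z))
      (κ * (α1 * Real.cos (κ * y) - α2 * Real.sin (κ * y))) y := by
    intro y
    have hs := (((hasDerivAt_id y).const_mul κ).sin).const_mul α1
    have hc := (((hasDerivAt_id y).const_mul κ).cos).const_mul α2
    have h := hs.add hc
    exact h.congr_deriv (by simp only [id, mul_one]; ring)
  have hG' : ∀ y : ℝ, HasDerivAt (fun z => κ * (α1 * Real.cos (κ * z) - α2 * Real.sin (κ * z)))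
      (-(κ ^ 2) * (α1 * Real.sin (κ * y) + α2 * Real.cos (κ * y))) y := by
    intro y
    have hc := (((hasDerivAt_id y).const_mul κ).cos).const_mul α1
    have hs := (((hasDerivAt_id y).const_mul κ).sin).const_mul α2
    have h := (hc.sub hs).const_mul κ
    exact h.congr_deriv (by simp only [id, mul_one]; ring)
  -- notation for values
  set Et : ℝ := Real.exp (-d1 * κ ^ 2 * t) with hEt
  set Gx : ℝ := α1 * Real.sin (κ * x) + α2 * Real.cos (κ * x) with hGx
  -- u: function rewrites
  have huT : (fun s => u s x) = fun s =>
      φ1 s * (α0 + (α1 * Real.sin (κ * x) + α2 * Real.cos (κ * x)) * Real.exp (-d1 * κ ^ 2 * s)) :=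
    funext fun s => by rw [hu]; ring
  have huX : (fun z => u t z) = fun z =>
      φ1 t * (α0 + (α1 * Real.sin (κ * z) + α2 * Real.cos (κ * z)) * Et) :=
    funext fun z => by rw [hu, hEt]; ring
  -- time derivative of u
  have hut : deriv (fun s => u s x) t
      = deriv φ1 t * (α0 + Gx * Et) + φ1 t * (Gx * (-d1 * κ ^ 2 * Et)) := by
    rw [huT]
    exact (((hφ1 t).hasDerivAt.mul (((hE t).const_mul Gx).const_add α0))).deriv
  -- first space derivative of u
  have hux : ∀ y : ℝ, deriv (fun z => u t z) y
      = φ1 t * (κ * (α1 * Real.cos (κ * y) - α2 * Real.sin (κ * y)) * Et) := by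
    intro y
    rw [huX]
    exact ((((hG y).mul_const Et).const_add α0).const_mul (φ1 t)).deriv
  -- second space derivative of u
  have huxx : deriv (fun y => deriv (fun z => u t z) y) x
      = φ1 t * (-(κ ^ 2) * Gx * Et) := by
    simp only [hux]
    have h := (((hG' x).mul_const Et).const_mul (φ1 t)).deriv
    rw [h]
  -- v
  have hvT : (fun s => v s x) = fun s =>
      φ2 s - φ1 s * (α0 + (α1 * Real.sin (κ * x) + α2 * Real.cos (κ * x)) * Real.exp (-d1 * κ ^ 2 * s)) :=
    funext fun s => by rw [hv, hu]; ring
  have hvX : (fun z => v t z) = fun z =>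
      φ2 t - φ1 t * (α0 + (α1 * Real.sin (κ * z) + α2 * Real.cos (κ * z)) * Et) :=
    funext fun z => by rw [hv, hu, hEt]; ring
  have hvt : deriv (fun s => v s x) t
      = deriv φ2 t - (deriv φ1 t * (α0 + Gx * Et) + φ1 t * (Gx * (-d1 * κ ^ 2 * Et))) := by
    rw [hvT]
    exact ((hφ2 t).hasDerivAt.sub ((hφ1 t).hasDerivAt.mul (((hE t).const_mul Gx).const_add α0))).deriv
  have hvx : ∀ y : ℝ, deriv (fun z => v t z) y
      = -(φ1 t * (κ * (α1 * Real.cos (κ * y) - α2 * Real.sin (κ * y)) * Et)) := by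
    intro y
    rw [hvX]
    exact (((((hG y).mul_const Et).const_add α0).const_mul (φ1 t)).const_sub (φ2 t)).deriv
  have hvxx : deriv (fun y => deriv (fun z => v t z) y) x
      = -(φ1 t * (-(κ ^ 2) * Gx * Et)) := by
    simp only [hvx]
    have h := ((((hG' x).mul_const Et).const_mul (φ1 t)).neg).deriv
    exact h
  -- w
  have hwT : (fun s => w s x) = fun s =>
      φ3 s + e * (φ1 s * (α0 + (α1 * Real.sin (κ * x) + α2 * Real.cos (κ * x)) * Real.exp (-d1 * κ ^ 2 * s))) :=
    funext fun s => by rw [hw, hu, he]; ring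
  have hwX : (fun z => w t z) = fun z =>
      φ3 t + e * (φ1 t * (α0 + (α1 * Real.sin (κ * z) + α2 * Real.cos (κ * z)) * Et)) :=
    funext fun z => by rw [hw, hu, he, hEt]; ring
  have hwt : deriv (fun s => w s x) t
      = deriv φ3 t + e * (deriv φ1 t * (α0 + Gx * Et) + φ1 t * (Gx * (-d1 * κ ^ 2 * Et))) := by
    rw [hwT]
    exact ((hφ3 t).hasDerivAt.add (((hφ1 t).hasDerivAt.mul
      (((hE t).const_mul Gx).const_add α0)).const_mul e)).deriv
  have hwx : ∀ y : ℝ, deriv (fun z => w t z) y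
      = e * (φ1 t * (κ * (α1 * Real.cos (κ * y) - α2 * Real.sin (κ * y)) * Et)) := by
    intro y
    rw [hwX]
    exact ((((((hG y).mul_const Et).const_add α0).const_mul (φ1 t)).const_mul e).const_add (φ3 t)).deriv
  have hwxx : deriv (fun y => deriv (fun z => w t z) y) x
      = e * (φ1 t * (-(κ ^ 2) * Gx * Et)) := by
    simp only [hwx]
    have h := ((((hG' x).mul_const Et).const_mul (φ1 t)).const_mul e).deriv
    rw [h]
  -- ODE identities
  have h1 : deriv φ1 t = -(φ1 t * (φ2 t - 1)) := by linarith [hode1 t]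
  have h2 : deriv φ2 t = φ2 t * φ3 t - ((d2 - d3) / (d1 - d3)) * (φ2 t * (φ2 t - 1))
      + (α0 * (d1 - d2) / (d1 - d3)) * φ1 t := by linarith [hode2 t]
  have h3 : deriv φ3 t = -(φ2 t * φ3 t) - (α0 * (d1 - d2) / (d1 - d3)) * φ1 t := by
    linarith [hode3 t]
  have hUval : u t x = φ1 t * (α0 + Gx * Et) := by rw [hu, hGx, hEt]; ring
  have hVval : v t x = φ2 t - φ1 t * (α0 + Gx * Et) := by rw [hv, hUval]
  have hWval : w t x = φ3 t + e * (φ1 t * (α0 + Gx * Et)) := by rw [hw, hUval, he]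
  refine ⟨?_, ?_, ?_⟩
  · rw [hut, huxx, hUval, hVval, h1, hκ2]
    field_simp
    ring
  · rw [hvt, hvxx, hUval, hVval, hWval, h1, h2, hκ2, he]
    field_simp
    ring
  · rw [hwt, hwxx, hUval, hVval, hWval, h1, h3, hκ2, he]
    field_simp
    ring
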